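/- Let s > 0, let P satisfy H1, and let 0 < x₀ ≤ x₁. If γ is a positive solution of the Dyson–Schwinger ODE on [x₀, x₁], then for every x ∈ [x₀, x₁] the integral identity γ(x) = (x/x₀)^{1/s}·(1 + γ(x₀)) − 1 − x^{1/s}·∫_{x₀}^x P(z) / (s·z^{1+1/s}·γ(z)) dz holds. -/

import Mathlib

open Real MeasureTheory Filter Set

noncomputable section

/-- `γ` is a positive solution of the Dyson–Schwinger ODE
`γ'(x) = (γ(x) + γ(x)² − P(x)) / (s·x·γ(x))` on the set `I`. -/
def IsDSSolution (s : ℝ) (P γ : ℝ → ℝ) (I : Set ℝ) : Prop :=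
  (∀ x ∈ I, 0 < γ x) ∧
    ∀ x ∈ I, HasDerivWithinAt γ ((γ x + (γ x) ^ 2 - P x) / (s * x * γ x)) I x

/-- Hypothesis H1: `P` is twice continuously differentiable on `[0,∞)`,
`P 0 = 0`, and `P x > 0` for `x > 0`. -/
def H1 (P : ℝ → ℝ) : Prop :=
  ContDiffOn ℝ 2 P (Set.Ici 0) ∧ P 0 = 0 ∧ ∀ x > (0 : ℝ), 0 < P x

/-- Hypothesis H2: `P` is strictly increasing on `[0,∞)`. -/
def H2 (P : ℝ → ℝ) : Prop := StrictMonoOn P (Set.Ici 0)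

/-- The nullcline `γ_c(x) = (√(1 + 4 P x) − 1)/2`. -/
def gammaC (P : ℝ → ℝ) (x : ℝ) : ℝ := (Real.sqrt (1 + 4 * P x) - 1) / 2

theorem stmt_2 (s : ℝ) (hs : 0 < s) (P : ℝ → ℝ) (hP : H1 P) (x₀ x₁ : ℝ)
    (hx₀ : 0 < x₀) (hx₀₁ : x₀ ≤ x₁) (γ : ℝ → ℝ)
    (hγ : IsDSSolution s P γ (Set.Icc x₀ x₁)) :
    ∀ x ∈ Set.Icc x₀ x₁,
      γ x = (x / x₀) ^ (1 / s) * (1 + γ x₀) - 1 -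
        x ^ (1 / s) * ∫ z in x₀..x, P z / (s * z ^ (1 + 1 / s) * γ z) := by
  obtain ⟨hpos, hdiff⟩ := hγ
  have hs' : s ≠ 0 := hs.ne'
  set c : ℝ := 1 / s with hc
  set f : ℝ → ℝ := fun x => x ^ (-c) * (1 + γ x) with hf
  set g : ℝ → ℝ := fun z => P z / (s * z ^ (1 + c) * γ z) with hg
  -- derivative of f within Icc
  have hfderiv : ∀ x ∈ Set.Icc x₀ x₁,
      HasDerivWithinAt f (-(g x)) (Set.Icc x₀ x₁) x := by
    intro x hx
    have hxpos : 0 < x := lt_of_lt_of_le hx₀ hx.1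
    have hγx : 0 < γ x := hpos x hx
    have h1 : HasDerivWithinAt (fun y : ℝ => y ^ (-c)) (-c * x ^ (-c - 1))
        (Set.Icc x₀ x₁) x :=
      (Real.hasDerivAt_rpow_const (Or.inl hxpos.ne')).hasDerivWithinAt
    have h2 : HasDerivWithinAt (fun y => 1 + γ y)
        ((γ x + γ x ^ 2 - P x) / (s * x * γ x)) (Set.Icc x₀ x₁) x :=
      (hdiff x hx).const_add 1
    have h3 := h1.mul h2
    refine h3.congr_deriv ?_
    symm
    have hu : (0:ℝ) < x ^ c := Real.rpow_pos_of_pos hxpos c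
    have e1 : x ^ (-c) = (x ^ c)⁻¹ := Real.rpow_neg hxpos.le c
    have e2 : x ^ (-c - 1) = (x ^ c)⁻¹ * x⁻¹ := by
      rw [show -c - 1 = -c + -1 by ring, Real.rpow_add hxpos, e1, Real.rpow_neg_one]
    have e3 : x ^ (1 + c) = x * x ^ c := by
      rw [Real.rpow_add hxpos, Real.rpow_one]
    simp only [hg, e1, e2, e3]
    field_simp
    rw [hc]
    field_simp
    ring
  have hγcont : ContinuousOn γ (Set.Icc x₀ x₁) := fun x hx =>
    (hdiff x hx).continuousWithinAt
  have hfcont : ContinuousOn f (Set.Icc x₀ x₁) := by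
    apply ContinuousOn.mul
    · intro x hx
      exact (Real.continuousAt_rpow_const x (-c)
        (Or.inl (lt_of_lt_of_le hx₀ hx.1).ne')).continuousWithinAt
    · exact continuousOn_const.add hγcont
  have hgcont : ContinuousOn g (Set.Icc x₀ x₁) := by
    apply ContinuousOn.div
    · exact (hP.1.continuousOn).mono (fun x hx => le_trans hx₀.le hx.1)
    · apply ContinuousOn.mul
      · apply continuousOn_const.mul
        intro x hx
        exact (Real.continuousAt_rpow_const x (1 + c)
          (Or.inl (lt_of_lt_of_le hx₀ hx.1).ne')).continuousWithinAt
      · exact hγcont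
    · intro x hx
      have hxpos : 0 < x := lt_of_lt_of_le hx₀ hx.1
      have := Real.rpow_pos_of_pos hxpos (1 + c)
      have := hpos x hx
      positivity
  intro x hx
  have hx0 : x₀ ≤ x := hx.1
  have hxpos : 0 < x := lt_of_lt_of_le hx₀ hx0
  have hsub : Set.Icc x₀ x ⊆ Set.Icc x₀ x₁ := Set.Icc_subset_Icc le_rfl hx.2
  have hint : IntervalIntegrable g volume x₀ x := by
    apply ContinuousOn.intervalIntegrable
    rw [Set.uIcc_of_le hx0]
    exact hgcont.mono hsub
  have key : ∫ z in x₀..x, -(g z) = f x - f x₀ := by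
    apply intervalIntegral.integral_eq_sub_of_hasDerivAt_of_le hx0
      (hfcont.mono hsub)
    · intro z hz
      exact (hfderiv z ⟨hz.1.le, hz.2.le.trans hx.2⟩).hasDerivAt
        (Icc_mem_nhds (lt_of_lt_of_le hx₀ hx.1 |> fun _ => hz.1) (hz.2.trans_le hx.2))
    · exact hint.neg
  rw [intervalIntegral.integral_neg] at key
  -- key : -∫ g = f x - f x₀
  have hI : (∫ z in x₀..x, g z) = f x₀ - f x := by linarith
  have hxc : (0:ℝ) < x ^ c := Real.rpow_pos_of_pos hxpos c
  have hx0c : (0:ℝ) < x₀ ^ c := Real.rpow_pos_of_pos hx₀ c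
  have efx : x ^ (-c) = (x ^ c)⁻¹ := Real.rpow_neg hxpos.le c
  have efx0 : x₀ ^ (-c) = (x₀ ^ c)⁻¹ := Real.rpow_neg hx₀.le c
  have ediv : (x / x₀) ^ c = x ^ c / x₀ ^ c := Real.div_rpow hxpos.le hx₀.le c
  have hfx : (x ^ c)⁻¹ * (1 + γ x) = (x₀ ^ c)⁻¹ * (1 + γ x₀) - ∫ z in x₀..x, g z := by
    have hfx' : f x = f x₀ - ∫ z in x₀..x, g z := by rw [hI]; ring
    simp only [hf] at hfx'
    rwa [efx, efx0] at hfx'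
  rw [show (1:ℝ)/s = c from rfl] at *
  rw [ediv]
  have h1 : γ x = x ^ c * ((x₀ ^ c)⁻¹ * (1 + γ x₀) - ∫ z in x₀..x, g z) - 1 := by
    have := congrArg (fun t => x ^ c * t) hfx
    rw [← mul_assoc, mul_inv_cancel₀ hxc.ne', one_mul] at this
    linarith
  rw [h1]
  field_simp
  ring
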